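/- arXiv:1703.00260 — 2 statements merged into one kernel-verified Lean document; each statement's English description precedes it below -/
import Mathlib

section
/- Let (Ω, 𝓕, ℙ) be a probability space with a filtration (𝓕_k)_{k∈ℕ}, and let (y_k), (u_k), (a_k), (b_k) be sequences of nonnegative integrable random variables adapted to (𝓕_k) such that almost surely, for all k, 𝔼[y_{k+1} | 𝓕_k] ≤ (1 + a_k)·y_k − u_k + b_k, and almost surely Σ_k a_k < ∞ and Σ_k b_k < ∞. Then, almost surely, the sequence (y_k) converges to a finite limit and Σ_k u_k < ∞. -/
open MeasureTheory ProbabilityTheory Filter Real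
open scoped InnerProductSpace BigOperators NNReal ENNReal

noncomputable section

namespace RSaux
variable {Ω : Type}

def qprod (a : ℕ → Ω → ℝ) (k : ℕ) (ω : Ω) : ℝ := ∏ j ∈ Finset.range k, (1 + a j ω)

theorem qprod_succ (a : ℕ → Ω → ℝ) (k : ℕ) (ω : Ω) :
    qprod a (k + 1) ω = qprod a k ω * (1 + a k ω) := Finset.prod_range_succ _ _

theorem qprod_one_le (a : ℕ → Ω → ℝ) (hann : ∀ k ω, 0 ≤ a k ω) (k : ℕ) (ω : Ω) :
    1 ≤ qprod a k ω := by
  induction k with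
  | zero => simp [qprod]
  | succ k ih => rw [qprod_succ]; nlinarith [hann k ω]

theorem qprod_pos (a : ℕ → Ω → ℝ) (hann : ∀ k ω, 0 ≤ a k ω) (k : ℕ) (ω : Ω) :
    0 < qprod a k ω := lt_of_lt_of_le one_pos (qprod_one_le a hann k ω)

theorem qprod_mono (a : ℕ → Ω → ℝ) (hann : ∀ k ω, 0 ≤ a k ω) (ω : Ω) :
    Monotone fun k => qprod a k ω := by
  apply monotone_nat_of_le_succ
  intro k
  rw [qprod_succ]
  nlinarith [qprod_pos a hann k ω, hann k ω]

theorem qprod_le_exp (a : ℕ → Ω → ℝ) (hann : ∀ k ω, 0 ≤ a k ω) (ω : Ω)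
    (hs : Summable fun k => a k ω) (k : ℕ) :
    qprod a k ω ≤ rexp (∑' j, a j ω) := by
  calc qprod a k ω ≤ ∏ j ∈ Finset.range k, rexp (a j ω) := by
        apply Finset.prod_le_prod
        · intro j _; linarith [hann j ω]
        · intro j _; rw [add_comm]; exact Real.add_one_le_exp (a j ω)
    _ = rexp (∑ j ∈ Finset.range k, a j ω) := (Real.exp_sum _ _).symm
    _ ≤ rexp (∑' j, a j ω) := by
        apply Real.exp_le_exp.2
        exact Summable.sum_le_tsum _ (fun j _ => hann j ω) hs


variable {m0 : MeasurableSpace Ω}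

theorem qprod_sm (a : ℕ → Ω → ℝ) (ℱ : MeasureTheory.Filtration ℕ m0) (haadp : Adapted ℱ a)
    {k m : ℕ} (hm : m ≤ k + 1) : StronglyMeasurable[ℱ k] (qprod a m) := by
  show StronglyMeasurable[ℱ k] fun ω => ∏ j ∈ Finset.range m, (1 + a j ω)
  apply Finset.stronglyMeasurable_fun_prod
  intro j hj
  have hj' : j ≤ k := by have := Finset.mem_range.1 hj; omega
  exact stronglyMeasurable_const.add ((haadp j).stronglyMeasurable.mono (ℱ.mono hj'))

theorem integrable_div_qprod {P : Measure Ω} (a : ℕ → Ω → ℝ) (hann : ∀ k ω, 0 ≤ a k ω)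
    (ℱ : MeasureTheory.Filtration ℕ m0) (haadp : Adapted ℱ a)
    {f : Ω → ℝ} (hf : Integrable f P) (hfnn : ∀ ω, 0 ≤ f ω) (m : ℕ) :
    Integrable (fun ω => f ω / qprod a m ω) P := by
  have hq : AEStronglyMeasurable (qprod a m) P :=
    ((qprod_sm a ℱ haadp (Nat.le_succ m)).mono (ℱ.le m)).aestronglyMeasurable
  apply hf.mono' ((hf.aemeasurable.div hq.aemeasurable).aestronglyMeasurable)
  filter_upwards with ω
  rw [Real.norm_eq_abs, Pi.div_apply, abs_div, abs_of_nonneg (hfnn ω),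
    abs_of_pos (qprod_pos a hann m ω)]
  exact div_le_self (hfnn ω) (qprod_one_le a hann m ω)


def bpart (a b : ℕ → Ω → ℝ) (k : ℕ) (ω : Ω) : ℝ :=
  ∑ j ∈ Finset.range k, b j ω / qprod a (j + 1) ω

def zproc (a b u y : ℕ → Ω → ℝ) (k : ℕ) (ω : Ω) : ℝ :=
  y k ω / qprod a k ω + bpart a u k ω - bpart a b k ω

theorem bpart_succ (a b : ℕ → Ω → ℝ) (k : ℕ) (ω : Ω) :
    bpart a b (k + 1) ω = bpart a b k ω + b k ω / qprod a (k + 1) ω :=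
  Finset.sum_range_succ _ _

theorem bpart_nonneg (a b : ℕ → Ω → ℝ) (hann : ∀ k ω, 0 ≤ a k ω)
    (hbnn : ∀ k ω, 0 ≤ b k ω) (k : ℕ) (ω : Ω) : 0 ≤ bpart a b k ω :=
  Finset.sum_nonneg fun j _ => div_nonneg (hbnn j ω) (qprod_pos a hann (j + 1) ω).le

theorem bpart_mono (a b : ℕ → Ω → ℝ) (hann : ∀ k ω, 0 ≤ a k ω)
    (hbnn : ∀ k ω, 0 ≤ b k ω) (ω : Ω) : Monotone fun k => bpart a b k ω := by
  apply monotone_nat_of_le_succ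
  intro k
  rw [bpart_succ]
  have := div_nonneg (hbnn k ω) (qprod_pos a hann (k + 1) ω).le
  linarith

theorem bpart_sm (a b : ℕ → Ω → ℝ) (ℱ : MeasureTheory.Filtration ℕ m0)
    (haadp : Adapted ℱ a) (hbadp : Adapted ℱ b) {k m : ℕ} (hm : m ≤ k + 1) :
    StronglyMeasurable[ℱ k] (bpart a b m) := by
  show StronglyMeasurable[ℱ k] fun ω => ∑ j ∈ Finset.range m, b j ω / qprod a (j + 1) ω
  apply Finset.stronglyMeasurable_fun_sum
  intro j hj
  have hj' : j ≤ k := by have := Finset.mem_range.1 hj; omega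
  have h1 : Measurable[ℱ k] (b j) := ((hbadp j).stronglyMeasurable.mono (ℱ.mono hj')).measurable
  have h2 : Measurable[ℱ k] (qprod a (j + 1)) :=
    (qprod_sm a ℱ haadp (by omega : j + 1 ≤ k + 1)).measurable
  exact (h1.div h2).stronglyMeasurable

theorem bpart_integrable {P : Measure Ω} (a b : ℕ → Ω → ℝ) (hann : ∀ k ω, 0 ≤ a k ω)
    (ℱ : MeasureTheory.Filtration ℕ m0) (haadp : Adapted ℱ a)
    (hbnn : ∀ k ω, 0 ≤ b k ω) (hbint : ∀ k, Integrable (b k) P) (m : ℕ) :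
    Integrable (bpart a b m) P := by
  have : ∀ j : ℕ, Integrable (fun ω => b j ω / qprod a (j + 1) ω) P := fun j =>
    integrable_div_qprod a hann ℱ haadp (hbint j) (fun ω => hbnn j ω) (j + 1)
  exact integrable_finset_sum (Finset.range m) fun j _ => this j

theorem zproc_sm (a b u y : ℕ → Ω → ℝ) (ℱ : MeasureTheory.Filtration ℕ m0)
    (haadp : Adapted ℱ a) (hbadp : Adapted ℱ b) (huadp : Adapted ℱ u) (hyadp : Adapted ℱ y)
    (k : ℕ) : StronglyMeasurable[ℱ k] (zproc a b u y k) := by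
  have h1 : Measurable[ℱ k] (y k) := (hyadp k)
  have h2 : Measurable[ℱ k] (qprod a k) :=
    (qprod_sm a ℱ haadp (Nat.le_succ k)).measurable
  have h3 := (bpart_sm a u ℱ haadp huadp (Nat.le_succ k)).measurable
  have h4 := (bpart_sm a b ℱ haadp hbadp (Nat.le_succ k)).measurable
  exact (((h1.div h2).add h3).sub h4).stronglyMeasurable
  
theorem zproc_integrable {P : Measure Ω} (a b u y : ℕ → Ω → ℝ) (hann : ∀ k ω, 0 ≤ a k ω)
    (ℱ : MeasureTheory.Filtration ℕ m0) (haadp : Adapted ℱ a)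
    (hbnn : ∀ k ω, 0 ≤ b k ω) (hbint : ∀ k, Integrable (b k) P)
    (hunn : ∀ k ω, 0 ≤ u k ω) (huint : ∀ k, Integrable (u k) P)
    (hynn : ∀ k ω, 0 ≤ y k ω) (hyint : ∀ k, Integrable (y k) P)
    (k : ℕ) : Integrable (zproc a b u y k) P :=
  ((integrable_div_qprod a hann ℱ haadp (hyint k) (fun ω => hynn k ω) k).add
    (bpart_integrable a u hann ℱ haadp hunn huint k)).sub
    (bpart_integrable a b hann ℱ haadp hbnn hbint k)


theorem zproc_condexp_step {P : Measure Ω} [IsProbabilityMeasure P]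
    (ℱ : MeasureTheory.Filtration ℕ m0) (a b u y : ℕ → Ω → ℝ)
    (hyadp : Adapted ℱ y) (huadp : Adapted ℱ u) (haadp : Adapted ℱ a) (hbadp : Adapted ℱ b)
    (hynn : ∀ k ω, 0 ≤ y k ω) (hunn : ∀ k ω, 0 ≤ u k ω)
    (hann : ∀ k ω, 0 ≤ a k ω) (hbnn : ∀ k ω, 0 ≤ b k ω)
    (hyint : ∀ k, Integrable (y k) P) (huint : ∀ k, Integrable (u k) P)
    (hbint : ∀ k, Integrable (b k) P)
    (hrec : ∀ k, ∀ᵐ ω ∂P, (P[y (k + 1)|ℱ k]) ω ≤ (1 + a k ω) * y k ω - u k ω + b k ω)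
    (k : ℕ) : P[zproc a b u y (k + 1)|ℱ k] ≤ᵐ[P] zproc a b u y k := by
  set V : Ω → ℝ := fun ω => (qprod a (k + 1) ω)⁻¹ * y (k + 1) ω with hV
  set W : Ω → ℝ := fun ω => bpart a u (k + 1) ω - bpart a b (k + 1) ω with hW
  have hVint : Integrable V P := by
    have h := integrable_div_qprod a hann ℱ haadp (hyint (k + 1))
      (fun ω => hynn (k + 1) ω) (k + 1)
    refine h.congr (Filter.Eventually.of_forall fun ω => ?_)
    simp [hV, div_eq_inv_mul]
  have hWint : Integrable W P :=
    (bpart_integrable a u hann ℱ haadp hunn huint (k + 1)).sub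
      (bpart_integrable a b hann ℱ haadp hbnn hbint (k + 1))
  have hWsm : StronglyMeasurable[ℱ k] W :=
    (bpart_sm a u ℱ haadp huadp (le_refl (k + 1))).sub
      (bpart_sm a b ℱ haadp hbadp (le_refl (k + 1)))
  have hsplit : zproc a b u y (k + 1) = V + W := by
    funext ω
    show y (k + 1) ω / qprod a (k + 1) ω + bpart a u (k + 1) ω - bpart a b (k + 1) ω = _
    simp only [Pi.add_apply, hV, hW]
    rw [div_eq_inv_mul]
    ring
  have h1 : P[zproc a b u y (k + 1)|ℱ k] =ᵐ[P] P[V|ℱ k] + P[W|ℱ k] := by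
    rw [hsplit]; exact condExp_add hVint hWint _
  have h2 : P[W|ℱ k] = W := condExp_of_stronglyMeasurable (ℱ.le k) hWsm hWint
  have hqsm : StronglyMeasurable[ℱ k] fun ω => (qprod a (k + 1) ω)⁻¹ :=
    ((qprod_sm a ℱ haadp (le_refl (k + 1))).measurable.inv).stronglyMeasurable
  have h3 : P[V|ℱ k] =ᵐ[P]
      (fun ω => (qprod a (k + 1) ω)⁻¹) * P[y (k + 1)|ℱ k] :=
    condExp_mul_of_stronglyMeasurable_left hqsm hVint (hyint (k + 1))
  filter_upwards [h1, h3, hrec k] with ω h1ω h3ω hrecω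
  have hqpos := qprod_pos a hann (k + 1) ω
  have hinv : (0:ℝ) ≤ (qprod a (k + 1) ω)⁻¹ := (inv_nonneg).2 hqpos.le
  calc (P[zproc a b u y (k + 1)|ℱ k]) ω
      = (P[V|ℱ k]) ω + (P[W|ℱ k]) ω := h1ω
    _ = (qprod a (k + 1) ω)⁻¹ * (P[y (k + 1)|ℱ k]) ω + W ω := by rw [h3ω, h2]; rfl
    _ ≤ (qprod a (k + 1) ω)⁻¹ * ((1 + a k ω) * y k ω - u k ω + b k ω) + W ω :=
        add_le_add_left (mul_le_mul_of_nonneg_left hrecω hinv) _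
    _ = zproc a b u y k ω := by
        have hqs := qprod_succ a k ω
        have hq0 : qprod a k ω ≠ 0 := (qprod_pos a hann k ω).ne'
        have ha0 : (1 : ℝ) + a k ω ≠ 0 := by have := hann k ω; positivity
        simp only [hW, zproc, bpart_succ]
        rw [hqs]
        field_simp
        ring


def gproc (a b u y : ℕ → Ω → ℝ) (N : ℕ) (k : ℕ) (ω : Ω) : ℝ :=
  zproc a b u y 0 ω + ∑ j ∈ Finset.range k,
    Set.indicator {ω' | bpart a b (j + 1) ω' ≤ N}
      (fun ω' => zproc a b u y (j + 1) ω' - zproc a b u y j ω') ω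

theorem gproc_succ (a b u y : ℕ → Ω → ℝ) (N k : ℕ) (ω : Ω) :
    gproc a b u y N (k + 1) ω = gproc a b u y N k ω +
      Set.indicator {ω' | bpart a b (k + 1) ω' ≤ N}
        (fun ω' => zproc a b u y (k + 1) ω' - zproc a b u y k ω') ω := by
  simp only [gproc, Finset.sum_range_succ]
  ring

theorem gproc_zero (a b u y : ℕ → Ω → ℝ) (N : ℕ) (ω : Ω) :
    gproc a b u y N 0 ω = zproc a b u y 0 ω := by simp [gproc]

theorem gproc_eq_zproc (a b u y : ℕ → Ω → ℝ) (hann : ∀ k ω, 0 ≤ a k ω)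
    (hbnn : ∀ k ω, 0 ≤ b k ω) (N k : ℕ) (ω : Ω) (h : bpart a b k ω ≤ N) :
    gproc a b u y N k ω = zproc a b u y k ω := by
  induction k with
  | zero => exact gproc_zero a b u y N ω
  | succ k ih =>
    have hk : bpart a b k ω ≤ N :=
      le_trans (bpart_mono a b hann hbnn ω (Nat.le_succ k)) h
    rw [gproc_succ, ih hk,
      Set.indicator_of_mem (show ω ∈ {ω' | bpart a b (k + 1) ω' ≤ (N:ℝ)} from h)]
    ring

theorem zproc_lb (a b u y : ℕ → Ω → ℝ) (hann : ∀ k ω, 0 ≤ a k ω)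
    (hunn : ∀ k ω, 0 ≤ u k ω) (hynn : ∀ k ω, 0 ≤ y k ω) (k : ℕ) (ω : Ω) :
    -bpart a b k ω ≤ zproc a b u y k ω := by
  have h1 : 0 ≤ y k ω / qprod a k ω :=
    div_nonneg (hynn k ω) (qprod_pos a hann k ω).le
  have h2 := bpart_nonneg a u hann hunn k ω
  simp only [zproc]
  linarith

theorem gproc_lb (a b u y : ℕ → Ω → ℝ) (hann : ∀ k ω, 0 ≤ a k ω)
    (hbnn : ∀ k ω, 0 ≤ b k ω) (hunn : ∀ k ω, 0 ≤ u k ω) (hynn : ∀ k ω, 0 ≤ y k ω)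
    (N k : ℕ) (ω : Ω) : -(N : ℝ) ≤ gproc a b u y N k ω := by
  induction k with
  | zero =>
    rw [gproc_zero]
    have := zproc_lb a b u y hann hunn hynn 0 ω
    have h0 : bpart a b 0 ω = 0 := by simp [bpart]
    have hN : (0:ℝ) ≤ N := Nat.cast_nonneg N
    linarith
  | succ k ih =>
    by_cases h : bpart a b (k + 1) ω ≤ N
    · rw [gproc_eq_zproc a b u y hann hbnn N (k + 1) ω h]
      have := zproc_lb a b u y hann hunn hynn (k + 1) ω
      linarith
    · rw [gproc_succ,
        Set.indicator_of_notMem (show ω ∉ {ω' | bpart a b (k + 1) ω' ≤ (N:ℝ)} from h)]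
      linarith

theorem gproc_sm (a b u y : ℕ → Ω → ℝ) (ℱ : MeasureTheory.Filtration ℕ m0)
    (haadp : Adapted ℱ a) (hbadp : Adapted ℱ b) (huadp : Adapted ℱ u) (hyadp : Adapted ℱ y)
    (N k : ℕ) : StronglyMeasurable[ℱ k] (gproc a b u y N k) := by
  apply StronglyMeasurable.add
  · exact (zproc_sm a b u y ℱ haadp hbadp huadp hyadp 0).mono (ℱ.mono (Nat.zero_le k))
  · apply Finset.stronglyMeasurable_fun_sum
    intro j hj
    have hjk : j < k := Finset.mem_range.1 hj
    have hs : MeasurableSet[ℱ k] {ω' | bpart a b (j + 1) ω' ≤ N} := by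
      have h := (bpart_sm a b ℱ haadp hbadp (le_refl (j + 1))).measurable
      exact (h.mono (ℱ.mono hjk.le) le_rfl) measurableSet_Iic
    exact ((((zproc_sm a b u y ℱ haadp hbadp huadp hyadp (j + 1)).mono
        (ℱ.mono hjk)).sub ((zproc_sm a b u y ℱ haadp hbadp huadp hyadp j).mono
        (ℱ.mono hjk.le))).indicator hs)

theorem gproc_integrable {P : Measure Ω} (a b u y : ℕ → Ω → ℝ)
    (hann : ∀ k ω, 0 ≤ a k ω) (ℱ : MeasureTheory.Filtration ℕ m0) (haadp : Adapted ℱ a)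
    (hbadp : Adapted ℱ b)
    (hbnn : ∀ k ω, 0 ≤ b k ω) (hbint : ∀ k, Integrable (b k) P)
    (hunn : ∀ k ω, 0 ≤ u k ω) (huint : ∀ k, Integrable (u k) P)
    (hynn : ∀ k ω, 0 ≤ y k ω) (hyint : ∀ k, Integrable (y k) P)
    (N k : ℕ) : Integrable (gproc a b u y N k) P := by
  have hz : ∀ m, Integrable (zproc a b u y m) P := fun m =>
    zproc_integrable a b u y hann ℱ haadp hbnn hbint hunn huint hynn hyint m
  apply Integrable.add (hz 0)
  apply integrable_finset_sum
  intro j hj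
  have hs : MeasurableSet {ω' | bpart a b (j + 1) ω' ≤ (N:ℝ)} := by
    have := ((bpart_sm a b ℱ haadp hbadp (le_refl (j + 1))).mono (ℱ.le j)).measurable
    exact this measurableSet_Iic
  exact ((hz (j + 1)).sub (hz j)).indicator hs


theorem gproc_supermartingale {P : Measure Ω} [IsProbabilityMeasure P]
    (ℱ : MeasureTheory.Filtration ℕ m0) (a b u y : ℕ → Ω → ℝ)
    (hyadp : Adapted ℱ y) (huadp : Adapted ℱ u) (haadp : Adapted ℱ a) (hbadp : Adapted ℱ b)
    (hynn : ∀ k ω, 0 ≤ y k ω) (hunn : ∀ k ω, 0 ≤ u k ω)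
    (hann : ∀ k ω, 0 ≤ a k ω) (hbnn : ∀ k ω, 0 ≤ b k ω)
    (hyint : ∀ k, Integrable (y k) P) (huint : ∀ k, Integrable (u k) P)
    (hbint : ∀ k, Integrable (b k) P)
    (hrec : ∀ k, ∀ᵐ ω ∂P, (P[y (k + 1)|ℱ k]) ω ≤ (1 + a k ω) * y k ω - u k ω + b k ω)
    (N : ℕ) : Supermartingale (gproc a b u y N) ℱ P := by
  have hz : ∀ m, Integrable (zproc a b u y m) P := fun m =>
    zproc_integrable a b u y hann ℱ haadp hbnn hbint hunn huint hynn hyint m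
  have hgint : ∀ k, Integrable (gproc a b u y N k) P := fun k =>
    gproc_integrable a b u y hann ℱ haadp hbadp hbnn hbint hunn huint hynn hyint N k
  refine supermartingale_nat (fun k => gproc_sm a b u y ℱ haadp hbadp huadp hyadp N k)
    hgint (fun k => ?_)
  set s : Set Ω := {ω' | bpart a b (k + 1) ω' ≤ (N : ℝ)} with hsdef
  set d : Ω → ℝ := fun ω => zproc a b u y (k + 1) ω - zproc a b u y k ω with hd
  have hsmk : MeasurableSet[ℱ k] s :=
    (bpart_sm a b ℱ haadp hbadp (le_refl (k + 1))).measurable measurableSet_Iic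
  have hdint : Integrable d P := (hz (k + 1)).sub (hz k)
  have hDint : Integrable (s.indicator d) P := hdint.indicator ((ℱ.le k) s hsmk)
  have hg_eq : gproc a b u y N (k + 1) = gproc a b u y N k + s.indicator d :=
    funext fun ω => gproc_succ a b u y N k ω
  rw [hg_eq]
  have hGcond : P[gproc a b u y N k|ℱ k] = gproc a b u y N k :=
    condExp_of_stronglyMeasurable (ℱ.le k)
      (gproc_sm a b u y ℱ haadp hbadp huadp hyadp N k) (hgint k)
  have hZcond : P[zproc a b u y k|ℱ k] = zproc a b u y k :=
    condExp_of_stronglyMeasurable (ℱ.le k)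
      (zproc_sm a b u y ℱ haadp hbadp huadp hyadp k) (hz k)
  have h3 : P[d|ℱ k] =ᵐ[P] P[zproc a b u y (k + 1)|ℱ k] - P[zproc a b u y k|ℱ k] :=
    condExp_sub (hz (k + 1)) (hz k) _
  filter_upwards [condExp_add (hgint k) hDint _, condExp_indicator hdint hsmk, h3,
    zproc_condexp_step ℱ a b u y hyadp huadp haadp hbadp hynn hunn hann hbnn
      hyint huint hbint hrec k] with ω h1 h2 h3 h4
  rw [h1, Pi.add_apply, hGcond, h2]
  have hind : s.indicator (P[d|ℱ k]) ω ≤ 0 := by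
    rw [Set.indicator_apply]
    split_ifs with hmem
    · rw [h3, Pi.sub_apply, hZcond]
      linarith
    · exact le_rfl
  linarith [hind]

theorem gproc_ae_tendsto {P : Measure Ω} [IsProbabilityMeasure P]
    (ℱ : MeasureTheory.Filtration ℕ m0) (a b u y : ℕ → Ω → ℝ)
    (hyadp : Adapted ℱ y) (huadp : Adapted ℱ u) (haadp : Adapted ℱ a) (hbadp : Adapted ℱ b)
    (hynn : ∀ k ω, 0 ≤ y k ω) (hunn : ∀ k ω, 0 ≤ u k ω)
    (hann : ∀ k ω, 0 ≤ a k ω) (hbnn : ∀ k ω, 0 ≤ b k ω)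
    (hyint : ∀ k, Integrable (y k) P) (huint : ∀ k, Integrable (u k) P)
    (hbint : ∀ k, Integrable (b k) P)
    (hrec : ∀ k, ∀ᵐ ω ∂P, (P[y (k + 1)|ℱ k]) ω ≤ (1 + a k ω) * y k ω - u k ω + b k ω)
    (N : ℕ) :
    ∀ᵐ ω ∂P, ∃ c, Tendsto (fun k => gproc a b u y N k ω) atTop (nhds c) := by
  have hsuper := gproc_supermartingale ℱ a b u y hyadp huadp haadp hbadp hynn hunn hann
    hbnn hyint huint hbint hrec N
  have hgint : ∀ k, Integrable (gproc a b u y N k) P := fun k =>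
    gproc_integrable a b u y hann ℱ haadp hbadp hbnn hbint hunn huint hynn hyint N k
  set C : ℝ := (∫ ω, zproc a b u y 0 ω ∂P) + 2 * N with hC
  have hbdd : ∀ k, eLpNorm (gproc a b u y N k) 1 P ≤ ENNReal.ofReal C := by
    intro k
    have h1 : ∫ ω, gproc a b u y N k ω ∂P ≤ ∫ ω, gproc a b u y N 0 ω ∂P := by
      have h := hsuper.setIntegral_le (Nat.zero_le k) (MeasurableSet.univ)
      simpa [Measure.restrict_univ] using h
    have h0 : ∫ ω, gproc a b u y N 0 ω ∂P = ∫ ω, zproc a b u y 0 ω ∂P :=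
      integral_congr_ae (Filter.Eventually.of_forall fun ω => gproc_zero a b u y N ω)
    have hptw : ∀ ω, ‖gproc a b u y N k ω‖ ≤ gproc a b u y N k ω + 2 * N := by
      intro ω
      have hlb := gproc_lb a b u y hann hbnn hunn hynn N k ω
      rw [Real.norm_eq_abs]
      exact abs_le.2 ⟨by linarith, by linarith⟩
    have h2 : ∫ ω, ‖gproc a b u y N k ω‖ ∂P ≤ C := by
      calc ∫ ω, ‖gproc a b u y N k ω‖ ∂P
          ≤ ∫ ω, (gproc a b u y N k ω + 2 * N) ∂P :=
            integral_mono (hgint k).norm ((hgint k).add (integrable_const _))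
              (fun ω => hptw ω)
        _ = (∫ ω, gproc a b u y N k ω ∂P) + 2 * N := by
            rw [integral_add (hgint k) (integrable_const _), integral_const]
            simp
        _ ≤ C := by rw [hC]; linarith [h1, h0.le, h0.ge]
    rw [eLpNorm_one_eq_lintegral_enorm,
      ← ofReal_integral_norm_eq_lintegral_enorm (hgint k)]
    exact ENNReal.ofReal_le_ofReal h2
  have hbdd' : ∀ k, eLpNorm ((-(gproc a b u y N)) k) 1 P ≤ C.toNNReal := by
    intro k
    have : (-(gproc a b u y N)) k = -(gproc a b u y N k) := rfl
    rw [this, eLpNorm_neg]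
    exact (hbdd k).trans_eq rfl
  have hconv := hsuper.neg.exists_ae_tendsto_of_bdd hbdd'
  filter_upwards [hconv] with ω hc
  obtain ⟨c, hc⟩ := hc
  refine ⟨-c, ?_⟩
  have := hc.neg
  simpa using this

end RSaux

open RSaux in
theorem robbins_siegmund
    {Ω : Type} {m0 : MeasurableSpace Ω} {P : Measure Ω} [IsProbabilityMeasure P]
    (ℱ : MeasureTheory.Filtration ℕ m0)
    (y u a b : ℕ → Ω → ℝ)
    (hyadp : Adapted ℱ y) (huadp : Adapted ℱ u) (haadp : Adapted ℱ a) (hbadp : Adapted ℱ b)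
    (hynn : ∀ k ω, 0 ≤ y k ω) (hunn : ∀ k ω, 0 ≤ u k ω)
    (hann : ∀ k ω, 0 ≤ a k ω) (hbnn : ∀ k ω, 0 ≤ b k ω)
    (hyint : ∀ k, Integrable (y k) P) (huint : ∀ k, Integrable (u k) P)
    (haint : ∀ k, Integrable (a k) P) (hbint : ∀ k, Integrable (b k) P)
    (hrec : ∀ k, ∀ᵐ ω ∂P, (P[y (k + 1)|ℱ k]) ω ≤ (1 + a k ω) * y k ω - u k ω + b k ω)
    (ha : ∀ᵐ ω ∂P, Summable fun k => a k ω)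
    (hb : ∀ᵐ ω ∂P, Summable fun k => b k ω) :
    ∀ᵐ ω ∂P, (∃ l : ℝ, Tendsto (fun k => y k ω) atTop (nhds l)) ∧
      Summable fun k => u k ω := by
  have hGall : ∀ᵐ ω ∂P, ∀ N : ℕ, ∃ c,
      Tendsto (fun k => gproc a b u y N k ω) atTop (nhds c) :=
    ae_all_iff.2 fun N => gproc_ae_tendsto ℱ a b u y hyadp huadp haadp hbadp
      hynn hunn hann hbnn hyint huint hbint hrec N
  filter_upwards [ha, hb, hGall] with ω hsa hsb hg
  -- summability of b_j / q_{j+1}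
  have hBsum : Summable (fun j => b j ω / qprod a (j + 1) ω) := by
    refine Summable.of_nonneg_of_le
      (fun j => div_nonneg (hbnn j ω) (qprod_pos a hann _ ω).le) (fun j => ?_) hsb
    exact div_le_self (hbnn j ω) (qprod_one_le a hann _ ω)
  set Bsum : ℝ := ∑' j, b j ω / qprod a (j + 1) ω with hBs
  have hBle : ∀ k, bpart a b k ω ≤ Bsum := fun k =>
    Summable.sum_le_tsum (Finset.range k)
      (fun j _ => div_nonneg (hbnn j ω) (qprod_pos a hann _ ω).le) hBsum
  have hBtend : Tendsto (fun k => bpart a b k ω) atTop (nhds Bsum) :=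
    hBsum.hasSum.tendsto_sum_nat
  obtain ⟨N, hN⟩ := exists_nat_ge Bsum
  obtain ⟨c, hc⟩ := hg N
  have hzt : Tendsto (fun k => zproc a b u y k ω) atTop (nhds c) := by
    refine hc.congr fun k => ?_
    exact gproc_eq_zproc a b u y hann hbnn N k ω ((hBle k).trans hN)
  obtain ⟨M, hM⟩ : ∃ M, ∀ k, zproc a b u y k ω ≤ M := by
    obtain ⟨M, hM⟩ := hzt.isBoundedUnder_le.bddAbove_range
    exact ⟨M, fun k => hM (Set.mem_range_self k)⟩
  -- summability of u_j / q_{j+1}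
  have hUsum : Summable (fun j => u j ω / qprod a (j + 1) ω) := by
    apply summable_of_sum_range_le (c := M + Bsum)
      (fun j => div_nonneg (hunn j ω) (qprod_pos a hann _ ω).le)
    intro k
    have h2 : bpart a u k ω =
        zproc a b u y k ω - y k ω / qprod a k ω + bpart a b k ω := by
      simp only [zproc]; ring
    have h3 : 0 ≤ y k ω / qprod a k ω :=
      div_nonneg (hynn k ω) (qprod_pos a hann k ω).le
    have h4 := hM k
    have h5 := hBle k
    show bpart a u k ω ≤ M + Bsum
    rw [h2]; linarith
  have hUtend : Tendsto (fun k => bpart a u k ω) atTop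
      (nhds (∑' j, u j ω / qprod a (j + 1) ω)) := hUsum.hasSum.tendsto_sum_nat
  -- qprod converges
  have hqbdd : ∀ k, qprod a k ω ≤ rexp (∑' j, a j ω) := qprod_le_exp a hann ω hsa
  have hqt : Tendsto (fun k => qprod a k ω) atTop (nhds (⨆ k, qprod a k ω)) :=
    tendsto_atTop_ciSup (qprod_mono a hann ω)
      ⟨rexp (∑' j, a j ω), by rintro x ⟨k, rfl⟩; exact hqbdd k⟩
  constructor
  · -- y converges
    have h1 : ∀ k, y k ω / qprod a k ω =
        zproc a b u y k ω - bpart a u k ω + bpart a b k ω := fun k => by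
      simp only [zproc]; ring
    have hyq : Tendsto (fun k => y k ω / qprod a k ω) atTop
        (nhds (c - (∑' j, u j ω / qprod a (j + 1) ω) + Bsum)) :=
      Tendsto.congr (fun k => (h1 k).symm) ((hzt.sub hUtend).add hBtend)
    refine ⟨(c - (∑' j, u j ω / qprod a (j + 1) ω) + Bsum) * (⨆ k, qprod a k ω), ?_⟩
    refine Tendsto.congr (fun k => ?_) (hyq.mul hqt)
    exact div_mul_cancel₀ _ (qprod_pos a hann k ω).ne'
  · -- u summable
    refine Summable.of_nonneg_of_le (fun j => hunn j ω) (fun j => ?_)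
      (hUsum.mul_right (rexp (∑' j, a j ω)))
    have hqpos := qprod_pos a hann (j + 1) ω
    have h1 : u j ω = u j ω / qprod a (j + 1) ω * qprod a (j + 1) ω :=
      (div_mul_cancel₀ _ hqpos.ne').symm
    calc u j ω = u j ω / qprod a (j + 1) ω * qprod a (j + 1) ω := h1
      _ ≤ u j ω / qprod a (j + 1) ω * rexp (∑' j, a j ω) :=
          mul_le_mul_of_nonneg_left (hqbdd (j + 1))
            (div_nonneg (hunn j ω) hqpos.le)
end
end

section
/- Let x ∈ ℝ^n, e_1, e_2 ∈ ℝ^n and α ∈ (0, 1/(√6·L)). Define z := Π[x − α·(T(x) + e_1)], x⁺ := Π[x − α·(T(z) + e_2)] and ρ := 1 − 6·L²·α². Then for every x* ∈ X*: ‖x⁺ − x*‖² ≤ ‖x − x*‖² − (ρ/2)·r_α(x)² + 2·α·⟨x* − z, e_2⟩ + (8 + ρ)·α²·‖e_1‖² + 8·α²·‖e_2‖². (This is the per-iteration recursive relation of the stochastic extragradient method, applied with x = x^k, e_1 = ε_1^k, e_2 = ε_2^k.) -/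
open MeasureTheory ProbabilityTheory Filter Real
open scoped InnerProductSpace BigOperators NNReal ENNReal

noncomputable section

private lemma extragradient_scalar_aux (S1 S2 I A B r E1 E2 L α : ℝ)
    (main : S1 ≤ S2 - A^2 - B^2 + 2*(α*(L*A*B)) + 2*(α*(E1*B)) + 2*α*I + 2*(α*(E2*B)))
    (hrsq : r^2 ≤ 2*A^2 + 2*α^2*E1^2)
    (hρ : 0 ≤ 1 - 6*L^2*α^2) :
    S1 ≤ S2 - ((1 - 6 * L ^ 2 * α ^ 2) / 2) * r ^ 2 + 2 * α * I
      + (8 + (1 - 6 * L ^ 2 * α ^ 2)) * α ^ 2 * E1 ^ 2 + 8 * α ^ 2 * E2 ^ 2 := by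
  have g1 : 2*(α*(L*A*B)) ≤ 6*L^2*α^2*A^2 + B^2/6 := by
    nlinarith [sq_nonneg (6*L*α*A - B)]
  have g2 : 2*(α*(E1*B)) ≤ B^2/8 + 8*α^2*E1^2 := by
    nlinarith [sq_nonneg (B - 8*α*E1)]
  have g3 : 2*(α*(E2*B)) ≤ B^2/8 + 8*α^2*E2^2 := by
    nlinarith [sq_nonneg (B - 8*α*E2)]
  have g4 : -(1-6*L^2*α^2)*A^2 ≤ -((1-6*L^2*α^2)/2)*r^2 + (1-6*L^2*α^2)*α^2*E1^2 := by
    nlinarith [mul_nonneg hρ (by linarith : (0:ℝ) ≤ 2*A^2 + 2*α^2*E1^2 - r^2)]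
  nlinarith [main, g1, g2, g3, g4, sq_nonneg B]

set_option maxHeartbeats 1000000 in
theorem extragradient_recursive_relation
    {n : ℕ} (X : Set (EuclideanSpace ℝ (Fin n)))
    (hXne : X.Nonempty) (hXcl : IsClosed X) (hXcv : Convex ℝ X)
    (Proj : EuclideanSpace ℝ (Fin n) → EuclideanSpace ℝ (Fin n))
    (hProj : ∀ v, Proj v ∈ X ∧ ∀ w ∈ X, ‖v - Proj v‖ ≤ ‖v - w‖)
    (T : EuclideanSpace ℝ (Fin n) → EuclideanSpace ℝ (Fin n))
    (L : ℝ) (hL : 0 < L) (hLip : LipschitzWith (Real.toNNReal L) T)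
    (hpm : ∀ v w, 0 ≤ ⟪T v, w - v⟫_ℝ → 0 ≤ ⟪T w, w - v⟫_ℝ)
    (hXStarNe : ∃ xs ∈ X, ∀ w ∈ X, 0 ≤ ⟪T xs, w - xs⟫_ℝ)
    (α : ℝ) (hα0 : 0 < α) (hαL : α < 1 / (Real.sqrt 6 * L))
    (x e1 e2 z xp : EuclideanSpace ℝ (Fin n))
    (hz : z = Proj (x - α • (T x + e1)))
    (hxp : xp = Proj (x - α • (T z + e2))) :
    ∀ xs ∈ X, (∀ w ∈ X, 0 ≤ ⟪T xs, w - xs⟫_ℝ) →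
      ‖xp - xs‖ ^ 2 ≤ ‖x - xs‖ ^ 2
        - ((1 - 6 * L ^ 2 * α ^ 2) / 2) * ‖x - Proj (x - α • T x)‖ ^ 2
        + 2 * α * ⟪xs - z, e2⟫_ℝ
        + (8 + (1 - 6 * L ^ 2 * α ^ 2)) * α ^ 2 * ‖e1‖ ^ 2
        + 8 * α ^ 2 * ‖e2‖ ^ 2 := by
  intro xs hxs hsol
  -- projection characterization
  have hchar : ∀ v, ∀ w ∈ X, ⟪v - Proj v, w - Proj v⟫_ℝ ≤ 0 := by
    intro v w hw
    have hmem := (hProj v).1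
    haveI : Nonempty X := ⟨⟨Proj v, hmem⟩⟩
    have heq : ‖v - Proj v‖ = ⨅ w : X, ‖v - w‖ := by
      refine le_antisymm (le_ciInf fun w => (hProj v).2 w w.2) ?_
      have hbdd : BddBelow (Set.range fun w : X => ‖v - (w : EuclideanSpace ℝ (Fin n))‖) := by
        refine ⟨0, ?_⟩
        rintro a ⟨w, rfl⟩
        exact norm_nonneg _
      exact ciInf_le hbdd ⟨Proj v, hmem⟩
    exact (norm_eq_iInf_iff_real_inner_le_zero hXcv hmem).1 heq w hw
  -- nonexpansiveness
  have hnonexp : ∀ u v, ‖Proj u - Proj v‖ ≤ ‖u - v‖ := by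
    intro u v
    have h1 := hchar u (Proj v) (hProj v).1
    have h2 := hchar v (Proj u) (hProj u).1
    have key : ‖Proj u - Proj v‖^2 ≤ ⟪u - v, Proj u - Proj v⟫_ℝ := by
      have e : ⟪u - v, Proj u - Proj v⟫_ℝ - ‖Proj u - Proj v‖^2
          = -⟪u - Proj u, Proj v - Proj u⟫_ℝ - ⟪v - Proj v, Proj u - Proj v⟫_ℝ := by
        simp only [inner_sub_left, inner_sub_right, ← real_inner_self_eq_norm_sq]
        ring_nf
      nlinarith [h1, h2, e]
    have cs := real_inner_le_norm (u - v) (Proj u - Proj v)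
    nlinarith [norm_nonneg (Proj u - Proj v), norm_nonneg (u - v), key, cs,
      sq_nonneg (‖Proj u - Proj v‖ - ‖u - v‖)]
  set p := Proj (x - α • T x) with hp
  set A := ‖x - z‖ with hA
  set B := ‖xp - z‖ with hB
  set r := ‖x - p‖ with hr
  clear_value r
  clear_value A
  clear_value B
  have hzX : z ∈ X := hz ▸ (hProj _).1
  have hxpX : xp ∈ X := hxp ▸ (hProj _).1
  -- step size bound
  have hβ : 6 * L^2 * α^2 < 1 := by
    have h6 : (0:ℝ) < Real.sqrt 6 := Real.sqrt_pos.2 (by norm_num)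
    have hd : 0 < Real.sqrt 6 * L := mul_pos h6 hL
    have hm : α * (Real.sqrt 6 * L) < 1 := (lt_div_iff₀ hd).1 hαL
    have hsq : (α * (Real.sqrt 6 * L))^2 < 1 := by
      have h0 : 0 ≤ α * (Real.sqrt 6 * L) := le_of_lt (mul_pos hα0 hd)
      nlinarith [hm]
    have h6sq : (Real.sqrt 6)^2 = 6 := Real.sq_sqrt (by norm_num)
    nlinarith [hsq, h6sq]
  -- Lipschitz bound
  have h4 : ‖T x - T z‖ ≤ L * ‖x - z‖ := by
    have := hLip.dist_le_mul x z
    rwa [dist_eq_norm, dist_eq_norm, Real.coe_toNNReal L hL.le] at this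
  -- projection inequalities
  have h1 : ⟪(x - α • (T z + e2)) - xp, xs - xp⟫_ℝ ≤ 0 := by
    rw [hxp]; exact hchar _ xs hxs
  have h2 : ⟪(x - α • (T x + e1)) - z, xp - z⟫_ℝ ≤ 0 := by
    rw [hz]; exact hchar _ xp hxpX
  -- pseudo-monotonicity
  have h3 : 0 ≤ ⟪T z, z - xs⟫_ℝ := hpm xs z (hsol z hzX)
  -- residual bound
  have h5 : ‖z - p‖ ≤ α * ‖e1‖ := by
    have hdiff : (x - α • (T x + e1)) - (x - α • T x) = -(α • e1) := by
      rw [smul_add]; abel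
    have := hnonexp (x - α • (T x + e1)) (x - α • T x)
    rw [← hz, ← hp, hdiff, norm_neg, norm_smul, Real.norm_eq_abs,
      abs_of_pos hα0] at this
    exact this
  have hrA : r ≤ A + α * ‖e1‖ := by
    calc r = ‖(x - z) + (z - p)‖ := by rw [hr]; congr 1; abel
    _ ≤ ‖x - z‖ + ‖z - p‖ := norm_add_le _ _
    _ ≤ A + α * ‖e1‖ := by rw [hA]; linarith [h5]
  -- expansion identities
  have id1 : ‖xp - xs‖^2 = ‖(x - α • (T z + e2)) - xs‖^2 - ‖(x - α • (T z + e2)) - xp‖^2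
      + 2*⟪(x - α • (T z + e2)) - xp, xs - xp⟫_ℝ := by
    have h : (x - α • (T z + e2)) - xs = ((x - α • (T z + e2)) - xp) + (xp - xs) := by abel
    rw [h, norm_add_sq_real]
    have h2' : ⟪(x - α • (T z + e2)) - xp, xp - xs⟫_ℝ
        = -⟪(x - α • (T z + e2)) - xp, xs - xp⟫_ℝ := by
      rw [show xp - xs = -(xs - xp) by abel, inner_neg_right]
    rw [h2']; ring
  have id2 : ‖(x - α • (T z + e2)) - xs‖^2 - ‖(x - α • (T z + e2)) - xp‖^2
      = ‖x - xs‖^2 - ‖x - xp‖^2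
        - 2*α*⟪T z, xp - z⟫_ℝ - 2*α*⟪T z, z - xs⟫_ℝ
        - 2*α*⟪e2, xp - z⟫_ℝ - 2*α*⟪e2, z - xs⟫_ℝ := by
    simp only [inner_sub_left, inner_sub_right, inner_add_left, inner_add_right,
      real_inner_smul_left, real_inner_smul_right, ← real_inner_self_eq_norm_sq]
    ring_nf
    simp only [real_inner_comm]
    ring_nf
  have id3 : ‖x - xp‖^2 = A^2 + B^2 - 2*⟪x - z, xp - z⟫_ℝ := by
    rw [hA, hB]
    simp only [inner_sub_left, inner_sub_right, ← real_inner_self_eq_norm_sq]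
    ring_nf
    simp only [real_inner_comm]
    ring_nf
  have id4 : ⟪(x - α • (T x + e1)) - z, xp - z⟫_ℝ
      = ⟪x - z, xp - z⟫_ℝ - α*⟪T x, xp - z⟫_ℝ - α*⟪e1, xp - z⟫_ℝ := by
    simp only [inner_sub_left, inner_add_left, real_inner_smul_left]
    ring
  have id7 : ⟪e2, z - xs⟫_ℝ = -⟪xs - z, e2⟫_ℝ := by
    rw [real_inner_comm, show z - xs = -(xs - z) by abel, inner_neg_left]
  -- Cauchy–Schwarz bounds
  have c1 : ⟪T x, xp - z⟫_ℝ - ⟪T z, xp - z⟫_ℝ ≤ L * A * B := by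
    calc ⟪T x, xp - z⟫_ℝ - ⟪T z, xp - z⟫_ℝ = ⟪T x - T z, xp - z⟫_ℝ := by
          rw [inner_sub_left]
    _ ≤ ‖T x - T z‖ * ‖xp - z‖ := real_inner_le_norm _ _
    _ ≤ L * A * B := by
        have hB0 : (0:ℝ) ≤ ‖xp - z‖ := norm_nonneg _
        rw [← hB] at hB0 ⊢
        exact mul_le_mul_of_nonneg_right (hA ▸ h4) hB0
  have c2 : ⟪e1, xp - z⟫_ℝ ≤ ‖e1‖ * B := by
    rw [hB]; exact real_inner_le_norm _ _
  have c3 : -⟪e2, xp - z⟫_ℝ ≤ ‖e2‖ * B := by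
    have h : -⟪e2, xp - z⟫_ℝ = ⟪e2, z - xp⟫_ℝ := by
      rw [show z - xp = -(xp - z) by abel, inner_neg_right]
    rw [h, hB, ← norm_neg (xp - z), show -(xp - z) = z - xp by abel]
    exact real_inner_le_norm _ _
  -- assemble main bound
  have m1 : α * (⟪T x, xp - z⟫_ℝ - ⟪T z, xp - z⟫_ℝ) ≤ α * (L * A * B) :=
    mul_le_mul_of_nonneg_left c1 hα0.le
  have m2 : α * ⟪e1, xp - z⟫_ℝ ≤ α * (‖e1‖ * B) :=
    mul_le_mul_of_nonneg_left c2 hα0.le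
  have m3 : α * (-⟪e2, xp - z⟫_ℝ) ≤ α * (‖e2‖ * B) :=
    mul_le_mul_of_nonneg_left c3 hα0.le
  have m4 : α * ⟪T z, z - xs⟫_ℝ ≥ 0 := mul_nonneg hα0.le h3
  have main : ‖xp - xs‖^2 ≤ ‖x - xs‖^2 - A^2 - B^2
      + 2*(α*(L*A*B)) + 2*(α*(‖e1‖*B)) + 2*α*⟪xs - z, e2⟫_ℝ + 2*(α*(‖e2‖*B)) := by
    have h2' : ⟪x - z, xp - z⟫_ℝ ≤ α*⟪T x, xp - z⟫_ℝ + α*⟪e1, xp - z⟫_ℝ := by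
      rw [id4] at h2; linarith
    rw [id1, id2, id3, id7]
    nlinarith [h1, h2', m1, m2, m3, m4]
  -- final combination
  have hrsq : r^2 ≤ 2*A^2 + 2*α^2*‖e1‖^2 := by
    have h0 : 0 ≤ r := by rw [hr]; exact norm_nonneg _
    nlinarith [hrA, sq_nonneg (A - α*‖e1‖),
      mul_nonneg (norm_nonneg (x - z)) (mul_nonneg hα0.le (norm_nonneg e1))]
  have hρ : 0 ≤ 1 - 6*L^2*α^2 := by linarith
  exact extragradient_scalar_aux _ _ _ A B r _ _ L α main hrsq hρ
end
end
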